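/- Let X and Y₁, …, Y_n (n ≥ 1) be jointly distributed random variables taking values in finite sets. For every α > 0, conditioning on more variables can only reduce the second conditional THC entropy: H̃_α(X | Y₁, …, Y_{n−1}, Y_n) ≤ H̃_α(X | Y₁, …, Y_{n−1}). -/

import Mathlib

open Finset

/-- The α-logarithm: `ln_α(ξ) = (ξ^(1-α) - 1)/(1-α)` for `α ≠ 1`, and `ln ξ` for `α = 1`. -/
noncomputable def alphaLog (α ξ : ℝ) : ℝ :=
  if α = 1 then Real.log ξ else (ξ ^ (1 - α) - 1) / (1 - α)

/-- The Tsallis–Havrda–Charvát entropy of order `α` of a pmf `p` on a finite set. -/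
noncomputable def thc (α : ℝ) {S : Type*} [Fintype S] (p : S → ℝ) : ℝ :=
  if α = 1 then -∑ s, p s * Real.log (p s)
  else ((∑ s, p s ^ α) - 1) / (1 - α)

/-- The binary THC entropy `h_α(q)`. -/
noncomputable def binThc (α q : ℝ) : ℝ :=
  if α = 1 then -(q * Real.log q) - (1 - q) * Real.log (1 - q)
  else (q ^ α + (1 - q) ^ α - 1) / (1 - α)

/-- First conditional THC entropy (Daróczy form): `H_α(X|Y) = Σ_y p(y)^α H_α(X|y)`,
where `p` is the joint pmf of `(X, Y)`.  (Terms with `p(y) = 0` vanish for `α > 0`.) -/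
noncomputable def condThc1 (α : ℝ) {SX SY : Type*} [Fintype SX] [Fintype SY]
    (p : SX × SY → ℝ) : ℝ :=
  ∑ y, (∑ x, p (x, y)) ^ α * thc α (fun x => p (x, y) / ∑ x', p (x', y))

/-- Second conditional THC entropy: `H̃_α(X|Y) = Σ_y p(y) H_α(X|y)`,
where `p` is the joint pmf of `(X, Y)`.  (Terms with `p(y) = 0` vanish.) -/
noncomputable def condThc2 (α : ℝ) {SX SY : Type*} [Fintype SX] [Fintype SY]
    (p : SX × SY → ℝ) : ℝ :=
  ∑ y, (∑ x, p (x, y)) * thc α (fun x => p (x, y) / ∑ x', p (x', y))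

/-- The pmf of a random variable `X` defined on a finite sample space with pmf `μ`. -/
noncomputable def distOf {Ω S : Type*} [Fintype Ω] [DecidableEq S]
    (μ : Ω → ℝ) (X : Ω → S) : S → ℝ :=
  fun s => ∑ ω ∈ Finset.univ.filter (fun ω => X ω = s), μ ω

/- ### Auxiliary lemmas -/

/-- Weighted Jensen for a concave function on `[0,∞)`, with weights `w` and points `P z / w z`. -/
lemma jensen_w_concave {SZ : Type*} [Fintype SZ] {f : ℝ → ℝ}
    (hf : ConcaveOn ℝ (Set.Ici 0) f)
    (w P : SZ → ℝ) (hw : ∀ z, 0 ≤ w z) (hP : ∀ z, 0 ≤ P z)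
    (hz : ∀ z, w z = 0 → P z = 0) (hW : 0 < ∑ z, w z) :
    ∑ z, w z * f (P z / w z) ≤ (∑ z, w z) * f ((∑ z, P z) / ∑ z, w z) := by
  set W := ∑ z, w z with hWdef
  have hW0 : W ≠ 0 := hW.ne'
  have h₁ : ∑ z : SZ, w z / W = 1 := by rw [← Finset.sum_div, div_self hW0]
  have key := hf.le_map_sum (t := Finset.univ) (w := fun z => w z / W)
    (p := fun z => P z / w z)
    (fun z _ => div_nonneg (hw z) hW.le) h₁
    (fun z _ => Set.mem_Ici.2 (div_nonneg (hP z) (hw z)))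
  have hsum : ∑ z : SZ, (w z / W) • (P z / w z) = (∑ z, P z) / W := by
    have hterm : ∀ z, (w z / W) • (P z / w z) = P z / W := by
      intro z
      rcases eq_or_ne (w z) 0 with h | h
      · simp [h, hz z h]
      · rw [smul_eq_mul]; field_simp
    rw [Finset.sum_congr rfl fun z _ => hterm z, ← Finset.sum_div]
  rw [hsum] at key
  have hmul : ∑ z : SZ, w z * f (P z / w z)
      = W * ∑ z : SZ, (w z / W) • f (P z / w z) := by
    rw [Finset.mul_sum]
    refine Finset.sum_congr rfl fun z _ => ?_
    rw [smul_eq_mul]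
    field_simp
  rw [hmul]
  exact mul_le_mul_of_nonneg_left key hW.le

/-- Weighted Jensen for a convex function on `[0,∞)`. -/
lemma jensen_w_convex {SZ : Type*} [Fintype SZ] {f : ℝ → ℝ}
    (hf : ConvexOn ℝ (Set.Ici 0) f)
    (w P : SZ → ℝ) (hw : ∀ z, 0 ≤ w z) (hP : ∀ z, 0 ≤ P z)
    (hz : ∀ z, w z = 0 → P z = 0) (hW : 0 < ∑ z, w z) :
    (∑ z, w z) * f ((∑ z, P z) / ∑ z, w z) ≤ ∑ z, w z * f (P z / w z) := by
  have h := jensen_w_concave hf.neg w P hw hP hz hW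
  simp only [Pi.neg_apply, mul_neg, Finset.sum_neg_distrib] at h
  linarith

/-- The key per-`y` inequality: mixing conditional distributions can only raise THC entropy. -/
lemma jensen_thc {SX SZ : Type*} [Fintype SX] [Fintype SZ] (α : ℝ) (hα : 0 < α)
    (P : SX → SZ → ℝ) (hP : ∀ x z, 0 ≤ P x z) :
    ∑ z, (∑ x, P x z) * thc α (fun x => P x z / ∑ x', P x' z) ≤
      (∑ z, ∑ x, P x z) * thc α (fun x => (∑ z, P x z) / ∑ z, ∑ x', P x' z) := by
  set w : SZ → ℝ := fun z => ∑ x, P x z with hw_def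
  have hw : ∀ z, 0 ≤ w z := fun z => Finset.sum_nonneg fun x _ => hP x z
  have hWnn : (0:ℝ) ≤ ∑ z, w z := Finset.sum_nonneg fun z _ => hw z
  rcases eq_or_lt_of_le hWnn with hW | hW
  · have hwz : ∀ z, w z = 0 :=
      fun z => (Finset.sum_eq_zero_iff_of_nonneg (fun z _ => hw z)).1 hW.symm z (mem_univ z)
    have h0 : ∀ z : SZ, (∑ x, P x z : ℝ) = 0 := hwz
    rw [show (∑ z, ∑ x, P x z : ℝ) = 0 from hW.symm, zero_mul]
    exact le_of_eq (Finset.sum_eq_zero fun z _ => by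
      show (∑ x, P x z) * thc α (fun x => P x z / ∑ x', P x' z) = 0
      rw [h0 z, zero_mul])
  · have hz : ∀ x z, w z = 0 → P x z = 0 := fun x z h =>
      le_antisymm (h ▸ Finset.single_le_sum (fun x _ => hP x z) (mem_univ x)) (hP x z)
    by_cases h1 : α = 1
    · subst h1
      have hthc : ∀ q : SX → ℝ, thc 1 q = ∑ x, Real.negMulLog (q x) := by
        intro q
        simp [thc, Real.negMulLog, ← Finset.sum_neg_distrib, neg_mul]
      simp only [hthc]
      calc ∑ z, w z * ∑ x, Real.negMulLog (P x z / w z)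
          = ∑ x, ∑ z, w z * Real.negMulLog (P x z / w z) := by
            simp_rw [Finset.mul_sum]; exact Finset.sum_comm
        _ ≤ ∑ x, (∑ z, w z) * Real.negMulLog ((∑ z, P x z) / ∑ z, w z) :=
            Finset.sum_le_sum fun x _ =>
              jensen_w_concave Real.concaveOn_negMulLog w (fun z => P x z)
                hw (fun z => hP x z) (hz x) hW
        _ = (∑ z, w z) * ∑ x, Real.negMulLog ((∑ z, P x z) / ∑ z, w z) := by
            rw [← Finset.mul_sum]
    · have hα1 : (1:ℝ) - α ≠ 0 := by
        intro h; exact h1 (by linarith)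
      have hthc : ∀ q : SX → ℝ, thc α q = ((∑ x, q x ^ α) - 1) / (1 - α) := by
        intro q; simp [thc, h1]
      simp only [hthc]
      have hL : ∑ z, w z * (((∑ x, (P x z / w z) ^ α) - 1) / (1 - α))
          = ((∑ z, w z * ∑ x, (P x z / w z) ^ α) - ∑ z, w z) / (1 - α) := by
        calc ∑ z, w z * (((∑ x, (P x z / w z) ^ α) - 1) / (1 - α))
            = ∑ z, (w z * ∑ x, (P x z / w z) ^ α - w z) / (1 - α) :=
              Finset.sum_congr rfl fun z _ => by field_simp
          _ = (∑ z, (w z * ∑ x, (P x z / w z) ^ α - w z)) / (1 - α) := by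
              rw [Finset.sum_div]
          _ = ((∑ z, w z * ∑ x, (P x z / w z) ^ α) - ∑ z, w z) / (1 - α) := by
              rw [Finset.sum_sub_distrib]
      have hR : (∑ z, w z) * (((∑ x, ((∑ z, P x z) / ∑ z, w z) ^ α) - 1) / (1 - α))
          = ((∑ z, w z) * (∑ x, ((∑ z, P x z) / ∑ z, w z) ^ α) - ∑ z, w z) / (1 - α) := by
        field_simp
      rw [hL, hR]
      have hswap : ∑ z, w z * ∑ x, (P x z / w z) ^ α
          = ∑ x, ∑ z, w z * (P x z / w z) ^ α := by
        simp_rw [Finset.mul_sum]; exact Finset.sum_comm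
      have hRsum : (∑ z, w z) * (∑ x, ((∑ z, P x z) / ∑ z, w z) ^ α)
          = ∑ x, (∑ z, w z) * ((∑ z, P x z) / ∑ z, w z) ^ α := Finset.mul_sum _ _ _
      rcases lt_or_gt_of_ne h1 with hlt | hgt
      · -- α < 1 : x ^ α is concave, and 1 - α > 0
        have hkey : ∑ z, w z * ∑ x, (P x z / w z) ^ α
            ≤ (∑ z, w z) * (∑ x, ((∑ z, P x z) / ∑ z, w z) ^ α) := by
          rw [hswap, hRsum]
          exact Finset.sum_le_sum fun x _ =>
            jensen_w_concave (Real.concaveOn_rpow hα.le hlt.le) w (fun z => P x z)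
              hw (fun z => hP x z) (hz x) hW
        have h1α : (0:ℝ) < 1 - α := by linarith
        rw [div_eq_mul_inv, div_eq_mul_inv]
        exact mul_le_mul_of_nonneg_right (by linarith) (inv_nonneg.mpr h1α.le)
      · -- α > 1 : x ^ α is convex, and 1 - α < 0
        have hkey : (∑ z, w z) * (∑ x, ((∑ z, P x z) / ∑ z, w z) ^ α)
            ≤ ∑ z, w z * ∑ x, (P x z / w z) ^ α := by
          rw [hswap, hRsum]
          exact Finset.sum_le_sum fun x _ =>
            jensen_w_convex (convexOn_rpow hgt.le) w (fun z => P x z)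
              hw (fun z => hP x z) (hz x) hW
        have h1α : ((1:ℝ) - α)⁻¹ ≤ 0 := inv_nonpos.mpr (by linarith)
        rw [div_eq_mul_inv, div_eq_mul_inv]
        exact mul_le_mul_of_nonpos_right (by linarith) h1α

/-- `condThc2` is invariant under relabeling of the conditioning variable. -/
lemma condThc2_comp_equiv {SX SY SY' : Type*} [Fintype SX] [Fintype SY] [Fintype SY']
    (α : ℝ) (e : SY ≃ SY') (p : SX × SY' → ℝ) :
    condThc2 α (fun xy : SX × SY => p (xy.1, e xy.2)) = condThc2 α p := by
  unfold condThc2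
  exact Fintype.sum_equiv e _ _ (fun y => rfl)

/-- Marginalizing the conditioning pair can only increase `condThc2`. -/
lemma condThc2_marginal_le {SX SY SZ : Type*} [Fintype SX] [Fintype SY] [Fintype SZ]
    (α : ℝ) (hα : 0 < α) (p : SX × SY × SZ → ℝ) (hp : ∀ a, 0 ≤ p a) :
    condThc2 α p ≤ condThc2 α (fun xy : SX × SY => ∑ z, p (xy.1, xy.2, z)) := by
  unfold condThc2
  rw [Fintype.sum_prod_type]
  refine Finset.sum_le_sum fun y _ => ?_
  have h := jensen_thc α hα (fun x z => p (x, y, z)) (fun x z => hp _)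
  calc ∑ z, (∑ x, p (x, y, z)) * thc α (fun x => p (x, y, z) / ∑ x', p (x', y, z))
      ≤ (∑ z, ∑ x, p (x, y, z)) *
        thc α (fun x => (∑ z, p (x, y, z)) / ∑ z, ∑ x', p (x', y, z)) := h
    _ = (∑ x, ∑ z, p (x, y, z)) *
        thc α (fun x => (∑ z, p (x, y, z)) / ∑ x', ∑ z, p (x', y, z)) := by
        have h2 : (∑ z, ∑ x, p (x, y, z) : ℝ) = ∑ x, ∑ z, p (x, y, z) :=
          Finset.sum_comm
        simp only [h2]

/-- For jointly distributed random variables `X, Y₁, …, Y_{n+1}` (so at least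
one `Y`) on finite sets, conditioning on more variables can only reduce the second conditional
THC entropy for `α > 0`:  `H̃_α(X | Y₁, …, Yₙ, Y_{n+1}) ≤ H̃_α(X | Y₁, …, Yₙ)`. -/
theorem condThc2_condition_on_more {Ω SX : Type*} [Fintype Ω] [Fintype SX] [DecidableEq SX]
    (n : ℕ) (S : Fin (n + 1) → Type*) [∀ i, Fintype (S i)] [∀ i, DecidableEq (S i)]
    (μ : Ω → ℝ) (hμ : ∀ ω, 0 ≤ μ ω) (hμ1 : ∑ ω, μ ω = 1)
    (X : Ω → SX) (Y : ∀ i : Fin (n + 1), Ω → S i)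
    (α : ℝ) (hα : 0 < α) :
    condThc2 α (distOf μ (fun ω => (X ω, fun i : Fin (n + 1) => Y i ω))) ≤
      condThc2 α (distOf μ (fun ω => (X ω, fun i : Fin n => Y i.castSucc ω))) := by
  classical
  let e : ((∀ i : Fin n, S i.castSucc) × S (Fin.last n)) ≃ (∀ i : Fin (n + 1), S i) :=
  { toFun := fun p => Fin.snoc p.1 p.2
    invFun := fun f => (fun i => f i.castSucc, f (Fin.last n))
    left_inv := fun p => by
      obtain ⟨t, z⟩ := p
      refine Prod.ext ?_ ?_
      · funext i; simp
      · simp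
    right_inv := fun f => by
      funext i
      induction i using Fin.lastCases with
      | last => simp
      | cast i => simp }
  set Zf : Ω → ((∀ i : Fin n, S i.castSucc) × S (Fin.last n)) :=
    fun ω => (fun i => Y i.castSucc ω, Y (Fin.last n) ω) with hZf
  set q : SX × ((∀ i : Fin n, S i.castSucc) × S (Fin.last n)) → ℝ :=
    distOf μ (fun ω => (X ω, Zf ω)) with hq_def
  have hq : ∀ a, 0 ≤ q a := fun a => Finset.sum_nonneg fun ω _ => hμ ω
  have he : ∀ ω, (fun i => Y i ω) = e (Zf ω) := by
    intro ω
    funext i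
    induction i using Fin.lastCases with
    | last => simp [e, hZf]
    | cast i => simp [e, hZf]
  have stepA : distOf μ (fun ω => (X ω, fun i : Fin (n + 1) => Y i ω))
      = fun xy : SX × (∀ i : Fin (n + 1), S i) => q (xy.1, e.symm xy.2) := by
    funext xy
    obtain ⟨x, y⟩ := xy
    simp only [distOf, hq_def]
    refine Finset.sum_congr ?_ (fun _ _ => rfl)
    ext ω
    simp only [Finset.mem_filter, Finset.mem_univ, true_and, Prod.mk.injEq]
    rw [he ω, Equiv.apply_eq_iff_eq_symm_apply]
  have stepC : (fun xy : SX × (∀ i : Fin n, S i.castSucc) => ∑ z, q (xy.1, xy.2, z))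
      = distOf μ (fun ω => (X ω, fun i : Fin n => Y i.castSucc ω)) := by
    funext xy
    obtain ⟨x, t⟩ := xy
    simp only [distOf, hq_def]
    rw [← Finset.sum_fiberwise
      (Finset.univ.filter fun ω => (X ω, fun i : Fin n => Y i.castSucc ω) = (x, t))
      (fun ω => Y (Fin.last n) ω) μ]
    refine Finset.sum_congr rfl fun z _ => Finset.sum_congr ?_ fun _ _ => rfl
    ext ω
    simp only [Finset.mem_filter, Finset.mem_univ, true_and, Prod.mk.injEq, hZf, and_assoc]
  calc condThc2 α (distOf μ (fun ω => (X ω, fun i : Fin (n + 1) => Y i ω)))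
      = condThc2 α q := by rw [stepA]; exact condThc2_comp_equiv α e.symm q
    _ ≤ condThc2 α (fun xy => ∑ z, q (xy.1, xy.2, z)) := condThc2_marginal_le α hα q hq
    _ = condThc2 α (distOf μ (fun ω => (X ω, fun i : Fin n => Y i.castSucc ω))) := by
        rw [stepC]
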